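/- arXiv:2411.05458 — 7 statements merged into one kernel-verified Lean document; each statement's English description precedes it below -/
import Mathlib

section
/- If α = p₁p₂⋯pₙ is a stamp folding of order n, then every string rotation of α (i.e., p₂p₃⋯pₙp₁) is also a stamp folding of order n. -/
/-- 1-based position of symbol `e` in the string `p`. -/
def posOf (p : List ℕ) (e : ℕ) : ℕ := p.idxOf e + 1

/-- `x` lies strictly between `a` and `b`. -/
def StrictlyBetween (a b x : ℕ) : Prop := min a b < x ∧ x < max a b

/-- Two same-side arcs with endpoint pairs `{a,b}` and `{c,d}` cross
if exactly one of `c`, `d` lies strictly between `a` and `b`. -/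
def ArcsCross (a b c d : ℕ) : Prop :=
  Xor' (StrictlyBetween a b c) (StrictlyBetween a b d)

/-- A stamp folding of order `n`: a permutation of `1,…,n` (as a list, `p i` is
the stamp at position `i`) such that no two bottom arcs (joining the positions
of stamps `i` and `i+1` for odd `i`) cross, and no two top arcs (even `i`) cross. -/
def IsStampFolding (n : ℕ) (p : List ℕ) : Prop :=
  p.Perm (List.range' 1 n) ∧
  ∀ i j : ℕ, 1 ≤ i → i < j → j + 1 ≤ n → i % 2 = j % 2 →
    ¬ ArcsCross (posOf p i) (posOf p (i + 1)) (posOf p j) (posOf p (j + 1))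

/-- A semi-meander of order `n`: a stamp folding in which stamp `n` is visible
from above when `n` is even and from below when `n` is odd, i.e. no arc on the
relevant side strictly covers the position of stamp `n`. -/
def IsSemiMeander (n : ℕ) (p : List ℕ) : Prop :=
  IsStampFolding n p ∧
  ∀ i : ℕ, 1 ≤ i → i + 1 ≤ n → i % 2 = n % 2 →
    ¬ StrictlyBetween (posOf p i) (posOf p (i + 1)) (posOf p n)

/-- Cyclic shift of a 1-based position in `[1, n]`. -/
def rotPos (n x : ℕ) : ℕ := if x = 1 then n else x - 1

lemma posOf_rotate_one (p : List ℕ) (hnd : p.Nodup) (e : ℕ) (he : e ∈ p) :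
    posOf (p.rotate 1) e = rotPos p.length (posOf p e) := by
  cases p with
  | nil => simp at he
  | cons x xs =>
    have hx : x ∉ xs := (List.nodup_cons.mp hnd).1
    have hr : (x :: xs).rotate 1 = xs ++ [x] := by
      simpa using List.rotate_cons_succ xs x 0
    rw [hr]
    by_cases hex : e = x
    · subst hex
      have h1 : List.idxOf e (xs ++ [e]) = xs.length := by
        rw [List.idxOf_append_of_notMem hx]
        simp
      have h2 : List.idxOf e (e :: xs) = 0 := List.idxOf_cons_self
      simp [posOf, h1, h2, rotPos]
    · have hexs : e ∈ xs := by
        rcases List.mem_cons.mp he with h | h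
        · exact absurd h hex
        · exact h
      have h1 : List.idxOf e (xs ++ [x]) = List.idxOf e xs :=
        List.idxOf_append_of_mem hexs
      have h2 : List.idxOf e (x :: xs) = (List.idxOf e xs).succ :=
        List.idxOf_cons_ne xs (fun h => hex h.symm)
      simp [posOf, h1, h2, rotPos]

lemma arcsCross_rotPos {n a b c d : ℕ}
    (ha : 1 ≤ a) (ha' : a ≤ n) (hb : 1 ≤ b) (hb' : b ≤ n)
    (hc : 1 ≤ c) (hc' : c ≤ n) (hd : 1 ≤ d) (hd' : d ≤ n)
    (hab : a ≠ b) (hac : a ≠ c) (had : a ≠ d) (hbc : b ≠ c) (hbd : b ≠ d) (hcd : c ≠ d)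
    (h : ArcsCross (rotPos n a) (rotPos n b) (rotPos n c) (rotPos n d)) :
    ArcsCross a b c d := by
  unfold ArcsCross StrictlyBetween Xor' Xor rotPos at *
  split_ifs at h <;> omega

lemma isStampFolding_rotate_one {n : ℕ} {p : List ℕ} (h : IsStampFolding n p) :
    IsStampFolding n (p.rotate 1) := by
  obtain ⟨hperm, hcross⟩ := h
  have hlen : p.length = n := by simpa using hperm.length_eq
  have hnd : p.Nodup := hperm.nodup_iff.mpr (List.nodup_range' (s := 1) (n := n))
  refine ⟨(List.rotate_perm p 1).trans hperm, ?_⟩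
  intro i j hi hij hj hpar hcr
  have hmem : ∀ e : ℕ, 1 ≤ e → e ≤ n → e ∈ p := by
    intro e h1 h2
    refine hperm.mem_iff.mpr ?_
    rw [List.mem_range'_1]
    omega
  have hji : i + 2 ≤ j := by omega
  have hmi : i ∈ p := hmem i hi (by omega)
  have hmi1 : i + 1 ∈ p := hmem (i + 1) (by omega) (by omega)
  have hmj : j ∈ p := hmem j (by omega) (by omega)
  have hmj1 : j + 1 ∈ p := hmem (j + 1) (by omega) hj
  have hpos : ∀ e : ℕ, e ∈ p → 1 ≤ posOf p e ∧ posOf p e ≤ n := by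
    intro e hme
    have := List.idxOf_lt_length_iff.mpr hme
    unfold posOf
    omega
  have hinj : ∀ e₁ e₂ : ℕ, e₁ ∈ p → e₂ ∈ p → e₁ ≠ e₂ → posOf p e₁ ≠ posOf p e₂ := by
    intro e₁ e₂ h₁ h₂ hne heq
    exact hne ((List.idxOf_inj (y := e₂) h₁).mp (by unfold posOf at heq; omega))
  rw [posOf_rotate_one p hnd i hmi, posOf_rotate_one p hnd (i + 1) hmi1,
      posOf_rotate_one p hnd j hmj, posOf_rotate_one p hnd (j + 1) hmj1, hlen] at hcr
  exact hcross i j hi hij hj hpar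
    (arcsCross_rotPos (hpos i hmi).1 (hpos i hmi).2 (hpos (i+1) hmi1).1 (hpos (i+1) hmi1).2
      (hpos j hmj).1 (hpos j hmj).2 (hpos (j+1) hmj1).1 (hpos (j+1) hmj1).2
      (hinj i (i+1) hmi hmi1 (by omega)) (hinj i j hmi hmj (by omega))
      (hinj i (j+1) hmi hmj1 (by omega)) (hinj (i+1) j hmi1 hmj (by omega))
      (hinj (i+1) (j+1) hmi1 hmj1 (by omega)) (hinj j (j+1) hmj hmj1 (by omega)) hcr)

/-- Every string rotation of a stamp folding of order `n` is a stamp folding of order `n`. -/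
theorem stamp_folding_rotate (n : ℕ) (p : List ℕ) (h : IsStampFolding n p) (k : ℕ) :
    IsStampFolding n (p.rotate k) := by
  induction k with
  | zero => simpa using h
  | succ k ih =>
    have := isStampFolding_rotate_one ih
    rwa [List.rotate_rotate] at this
end

section
/- A string α = p₁p₂⋯pₙ with p₁ = n is a stamp folding of order n if and only if p₂p₃⋯pₙ is a semi-meander of order n−1. -/
lemma sb_shift (a b x : ℕ) :
    StrictlyBetween (a+1) (b+1) (x+1) ↔ StrictlyBetween a b x := by
  unfold StrictlyBetween; omega

lemma ac_shift (a b c d : ℕ) :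
    ArcsCross (a+1) (b+1) (c+1) (d+1) ↔ ArcsCross a b c d := by
  unfold ArcsCross StrictlyBetween Xor' Xor; omega

lemma ac_one (a b c : ℕ) :
    ArcsCross (a+1) (b+1) (c+1) 1 ↔ StrictlyBetween a b c := by
  unfold ArcsCross StrictlyBetween Xor' Xor; omega

lemma posOf_cons_self (n : ℕ) (q : List ℕ) : posOf (n :: q) n = 1 := by
  simp [posOf]

lemma posOf_cons_of_ne {e n : ℕ} (q : List ℕ) (h : n ≠ e) :
    posOf (n :: q) e = posOf q e + 1 := by
  simp [posOf, List.idxOf_cons_ne _ h]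

lemma perm_cons_iff (m : ℕ) (q : List ℕ) :
    ((m+1) :: q).Perm (List.range' 1 (m+1)) ↔ q.Perm (List.range' 1 m) := by
  have h : List.range' 1 (m+1) = List.range' 1 m ++ [m+1] := by
    rw [List.range'_concat]; ring_nf
  rw [h]
  constructor
  · intro hp
    have := hp.trans (List.perm_append_comm)
    simpa using (List.perm_cons (m+1)).mp (this.trans (by simp))
  · intro hp
    exact ((List.perm_cons (m+1)).mpr hp).trans
      ((List.perm_append_comm).trans (by simp)).symm

/-- A string `n · q` is a stamp folding of order `n` iff `q` is a semi-meander of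
order `n - 1`. -/
theorem stamp_folding_iff_semi_meander (n : ℕ) (hn : 1 ≤ n) (q : List ℕ) :
    IsStampFolding n (n :: q) ↔ IsSemiMeander (n - 1) q := by
  obtain ⟨m, rfl⟩ : ∃ m, n = m + 1 := ⟨n - 1, by omega⟩
  simp only [Nat.add_sub_cancel]
  have hne : ∀ e : ℕ, e ≤ m → m + 1 ≠ e := by omega
  have hpos : ∀ e : ℕ, e ≤ m → posOf ((m+1) :: q) e = posOf q e + 1 := by
    intro e he; exact posOf_cons_of_ne q (hne e he)
  constructor
  · rintro ⟨hperm, hcross⟩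
    have hq : q.Perm (List.range' 1 m) := (perm_cons_iff m q).mp hperm
    refine ⟨⟨hq, ?_⟩, ?_⟩
    · intro i j hi hij hj hpar h
      refine hcross i j hi hij (by omega) hpar ?_
      rw [hpos i (by omega), hpos (i+1) (by omega), hpos j (by omega),
        hpos (j+1) (by omega), ac_shift]
      exact h
    · intro i hi hile hpar h
      refine hcross i m hi (by omega) (by omega) hpar ?_
      rw [hpos i (by omega), hpos (i+1) (by omega), hpos m (by omega),
        posOf_cons_self, ac_one]
      exact h
  · rintro ⟨⟨hq, hcross⟩, hvis⟩
    refine ⟨(perm_cons_iff m q).mpr hq, ?_⟩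
    intro i j hi hij hj hpar h
    by_cases hjm : j + 1 ≤ m
    · refine hcross i j hi hij hjm hpar ?_
      rw [hpos i (by omega), hpos (i+1) (by omega), hpos j (by omega),
        hpos (j+1) (by omega), ac_shift] at h
      exact h
    · have hjm' : j = m := by omega
      subst hjm'
      refine hvis i hi (by omega) hpar ?_
      rw [hpos i (by omega), hpos (i+1) (by omega), hpos j (by omega),
        posOf_cons_self, ac_one] at h
      exact h
end

section
/- If α = p₁p₂⋯pₙ is a semi-meander with p₁ = n, then the rotation p₂p₃⋯pₙp₁ is also a semi-meander. -/
/-- If `n · q` is a semi-meander of order `n`, then its rotation `q · n` is also a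
semi-meander of order `n`. -/
theorem semi_meander_rotate_of_head (n : ℕ) (q : List ℕ)
    (h : IsSemiMeander n (n :: q)) : IsSemiMeander n (q ++ [n]) := by
  obtain ⟨⟨hperm, hcross⟩, _⟩ := h
  have hlen : q.length + 1 = n := by
    have := hperm.length_eq; simpa using this
  have hnodup : (n :: q).Nodup := hperm.nodup_iff.mpr List.nodup_range'
  have hn : n ∉ q := (List.nodup_cons.mp hnodup).1
  have hmemq : ∀ e : ℕ, 1 ≤ e → e < n → e ∈ q := by
    intro e h1 h2
    have : e ∈ (n :: q) := hperm.mem_iff.mpr (by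
      rw [List.mem_range'_1]; omega)
    rcases List.mem_cons.mp this with rfl | h
    · omega
    · exact h
  have hposn : posOf (n :: q) n = 1 := by simp [posOf]
  have hposn' : posOf (q ++ [n]) n = n := by
    simp [posOf, List.idxOf_append_of_notMem hn]
    omega
  have hshift : ∀ e ∈ q, posOf (n :: q) e = posOf (q ++ [n]) e + 1 := by
    intro e he
    have hne : n ≠ e := fun h => hn (h ▸ he)
    simp [posOf, List.idxOf_cons_ne _ hne, List.idxOf_append_of_mem he]
  have hbound : ∀ e ∈ q, posOf (q ++ [n]) e < n := by
    intro e he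
    have := List.idxOf_lt_length_iff.mpr he
    simp [posOf, List.idxOf_append_of_mem he]
    omega
  refine ⟨⟨(List.perm_append_singleton n q).trans hperm, ?_⟩, ?_⟩
  · intro i j hi hij hjn hpar
    have hiq : i ∈ q := hmemq i hi (by omega)
    have hi1q : i + 1 ∈ q := hmemq (i + 1) (by omega) (by omega)
    have hjq : j ∈ q := hmemq j (by omega) (by omega)
    have H := hcross i j hi hij hjn hpar
    rcases eq_or_lt_of_le hjn with heq | hlt
    · have hj1 : j + 1 = n := heq
      rw [hshift i hiq, hshift (i + 1) hi1q, hshift j hjq, hj1, hposn] at H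
      rw [hj1, hposn']
      have b1 := hbound i hiq
      have b2 := hbound (i + 1) hi1q
      simp only [ArcsCross, Xor', Xor, StrictlyBetween] at H ⊢
      omega
    · have hj1q : j + 1 ∈ q := hmemq (j + 1) (by omega) hlt
      rw [hshift i hiq, hshift (i + 1) hi1q, hshift j hjq, hshift (j + 1) hj1q] at H
      simp only [ArcsCross, Xor', Xor, StrictlyBetween] at H ⊢
      omega
  · intro i h1 h2 _
    have hiq : i ∈ q := hmemq i h1 (by omega)
    have b1 := hbound i hiq
    have b2 : posOf (q ++ [n]) (i + 1) ≤ n := by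
      rcases eq_or_lt_of_le h2 with heq | hlt
      · rw [heq, hposn']
      · exact le_of_lt (hbound (i + 1) (hmemq (i + 1) (by omega) hlt))
    rw [hposn']
    simp only [StrictlyBetween]
    omega
end

section
/- For n > 1, if p₁p₂⋯pₙ is a semi-meander of order n, then its reversal pₙpₙ₋₁⋯p₁ is also a semi-meander of order n; consequently, the number of semi-meanders of order n is even. -/
/-- indexOf in a reversed list, for nodup lists. -/
lemma indexOf_reverse_aux {l : List ℕ} (h : l.Nodup) {e : ℕ} (he : e ∈ l) :
    l.reverse.idxOf e = l.length - 1 - l.idxOf e := by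
  have hi : l.idxOf e < l.length := List.idxOf_lt_length_iff.mpr he
  have hj : l.length - 1 - l.idxOf e < l.reverse.length := by simp; omega
  have hrev : l.reverse[l.length - 1 - l.idxOf e] = e := by
    rw [List.getElem_reverse]
    have : l.length - 1 - (l.length - 1 - l.idxOf e) = l.idxOf e := by omega
    simp_rw [this]
    exact List.getElem_idxOf hi
  have := List.Nodup.idxOf_getElem (List.nodup_reverse.mpr h) _ hj
  rw [hrev] at this
  exact this

/-- posOf in a reversed list. -/
lemma posOf_reverse {l : List ℕ} (h : l.Nodup) {e : ℕ} (he : e ∈ l) :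
    posOf l.reverse e = l.length + 1 - posOf l e := by
  have hi : l.idxOf e < l.length := List.idxOf_lt_length_iff.mpr he
  unfold posOf
  rw [indexOf_reverse_aux h he]
  omega

lemma posOf_le {l : List ℕ} {e : ℕ} (he : e ∈ l) : posOf l e ≤ l.length := by
  have := List.idxOf_lt_length_iff.mpr he
  unfold posOf; omega

lemma strictlyBetween_flip {n a b x : ℕ} (ha : 1 ≤ a) (ha' : a ≤ n) (hb : 1 ≤ b)
    (hb' : b ≤ n) (hx : 1 ≤ x) (hx' : x ≤ n) :
    StrictlyBetween (n + 1 - a) (n + 1 - b) (n + 1 - x) ↔ StrictlyBetween a b x := by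
  unfold StrictlyBetween
  omega

/-- A finite set carrying a fixed-point-free involution has even cardinality. -/
lemma even_card_of_involution {α : Type*} [DecidableEq α] (s : Finset α) (f : α → α)
    (hmem : ∀ a ∈ s, f a ∈ s) (hinv : ∀ a ∈ s, f (f a) = a) (hne : ∀ a ∈ s, f a ≠ a) :
    Even s.card := by
  induction s using Finset.strongInduction with
  | _ s ih =>
    rcases s.eq_empty_or_nonempty with rfl | ⟨a, ha⟩
    · simp
    · have hfa : f a ∈ s := hmem a ha
      have hne' : f a ≠ a := hne a ha
      have hsub : ({a, f a} : Finset α) ⊆ s := by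
        intro x hx; simp at hx; rcases hx with rfl | rfl <;> assumption
      have hss : s \ {a, f a} ⊂ s :=
        Finset.sdiff_ssubset hsub ⟨a, by simp⟩
      have hmem' : ∀ b ∈ s \ {a, f a}, f b ∈ s \ {a, f a} := by
        intro b hb
        simp only [Finset.mem_sdiff, Finset.mem_insert, Finset.mem_singleton] at hb ⊢
        obtain ⟨hbs, hb1⟩ := hb
        push_neg at hb1 ⊢
        refine ⟨hmem b hbs, ?_, ?_⟩
        · intro h; apply hb1.2; rw [← hinv b hbs, h]
        · intro h
          apply hb1.1
          have := congrArg f h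
          rwa [hinv b hbs, hinv a ha] at this
      have hev := ih _ hss hmem' (fun b hb => hinv b (Finset.mem_sdiff.mp hb).1)
        (fun b hb => hne b (Finset.mem_sdiff.mp hb).1)
      have hcard : (s \ {a, f a}).card = s.card - 2 := by
        rw [Finset.card_sdiff_of_subset hsub, Finset.card_insert_of_notMem (by simpa using hne'.symm),
          Finset.card_singleton]
      have h2 : 2 ≤ s.card := by
        calc 2 = ({a, f a} : Finset α).card := by
              rw [Finset.card_insert_of_notMem (by simpa using hne'.symm), Finset.card_singleton]
          _ ≤ s.card := Finset.card_le_card hsub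
      obtain ⟨k, hk⟩ := hev
      exact ⟨k + 1, by omega⟩

/-- For `n > 1`, the reversal of a semi-meander of order `n` is a semi-meander of
order `n`; consequently the number of semi-meanders of order `n` is even. -/
theorem semi_meander_reverse_and_even (n : ℕ) (hn : 1 < n) :
    (∀ p : List ℕ, IsSemiMeander n p → IsSemiMeander n p.reverse) ∧
    Even (Set.ncard {p : List ℕ | IsSemiMeander n p}) := by
  have key : ∀ p : List ℕ, IsSemiMeander n p → IsSemiMeander n p.reverse := by
    intro p hp
    obtain ⟨⟨hperm, hcross⟩, hvis⟩ := hp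
    have hlen : p.length = n := by simpa using hperm.length_eq
    have hnd : p.Nodup := hperm.nodup_iff.mpr List.nodup_range'
    have hmem : ∀ k : ℕ, 1 ≤ k → k ≤ n → k ∈ p := by
      intro k h1 h2
      exact hperm.mem_iff.mpr (List.mem_range'.mpr ⟨k - 1, by omega, by omega⟩)
    have hpos : ∀ k : ℕ, 1 ≤ k → k ≤ n →
        posOf p.reverse k = n + 1 - posOf p k ∧ 1 ≤ posOf p k ∧ posOf p k ≤ n := by
      intro k h1 h2
      have hk := hmem k h1 h2
      refine ⟨?_, Nat.le_add_left 1 _, hlen ▸ posOf_le hk⟩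
      rw [posOf_reverse hnd hk, hlen]
    refine ⟨⟨p.reverse_perm.trans hperm, ?_⟩, ?_⟩
    · intro i j hi hij hj hmod hc
      obtain ⟨e1, e2, e3⟩ := hpos i hi (by omega)
      obtain ⟨f1, f2, f3⟩ := hpos (i + 1) (by omega) (by omega)
      obtain ⟨g1, g2, g3⟩ := hpos j (by omega) (by omega)
      obtain ⟨k1, k2, k3⟩ := hpos (j + 1) (by omega) (by omega)
      apply hcross i j hi hij hj hmod
      rw [e1, f1, g1, k1] at hc
      unfold ArcsCross at hc ⊢
      rwa [strictlyBetween_flip e2 e3 f2 f3 g2 g3,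
        strictlyBetween_flip e2 e3 f2 f3 k2 k3] at hc
    · intro i hi hin hmod hc
      obtain ⟨e1, e2, e3⟩ := hpos i hi (by omega)
      obtain ⟨f1, f2, f3⟩ := hpos (i + 1) (by omega) (by omega)
      obtain ⟨g1, g2, g3⟩ := hpos n (by omega) le_rfl
      apply hvis i hi hin hmod
      rw [e1, f1, g1] at hc
      rwa [strictlyBetween_flip e2 e3 f2 f3 g2 g3] at hc
  refine ⟨key, ?_⟩
  have hfin : {p : List ℕ | IsSemiMeander n p}.Finite := by
    apply Set.Finite.subset (List.range' 1 n).permutations.toFinset.finite_toSet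
    intro p hp
    exact Finset.mem_coe.mpr (List.mem_toFinset.mpr (List.mem_permutations.mpr hp.1.1))
  rw [Set.ncard_eq_toFinset_card _ hfin]
  apply even_card_of_involution _ List.reverse
  · intro a ha
    rw [Set.Finite.mem_toFinset] at ha ⊢
    exact key a ha
  · intro a _; exact a.reverse_reverse
  · intro a ha hrev
    rw [Set.Finite.mem_toFinset] at ha
    have hperm := ha.1.1
    have hlen : a.length = n := by simpa using hperm.length_eq
    have hnd : a.Nodup := hperm.nodup_iff.mpr List.nodup_range'
    have h1 : a.length - 1 < a.length := by omega
    have he : a[a.length - 1] ∈ a := List.getElem_mem h1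
    have hix := indexOf_reverse_aux hnd he
    rw [hrev, List.Nodup.idxOf_getElem hnd _ h1] at hix
    omega
end

section
/- Let α = p₁p₂⋯pₙ be a semi-meander with p₁ ≠ n. Let j* be the least j ≥ 1 such that pⱼ₊₁⋯pₙp₁⋯pⱼ is a semi-meander. Then: j* = 1 if p₁ = 1 and n is even; j* = I(p₁+1, α) if p₁ and n have the same parity; and j* = I(p₁−1, α) if p₁ and n have different parities, where I(e, α) is the position of symbol e in α. -/
namespace SMaux

lemma arcsCross_comm {a b c d : ℕ} (h2 : a ≠ c) (h3 : a ≠ d)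
    (h4 : b ≠ c) (h5 : b ≠ d) :
    ArcsCross a b c d ↔ ArcsCross c d a b := by
  unfold ArcsCross StrictlyBetween Xor' Xor; omega

lemma cross_shift {n j a b c d a' b' c' d' : ℕ}
    (han : a ≤ n) (hbn : b ≤ n) (hcn : c ≤ n) (hdn : d ≤ n)
    (ha1 : 1 ≤ a) (hb1 : 1 ≤ b) (hc1 : 1 ≤ c) (hd1 : 1 ≤ d)
    (h2 : a ≠ c) (h3 : a ≠ d) (h4 : b ≠ c) (h5 : b ≠ d)
    (hj : j ≤ n)
    (ea : a' = if j < a then a - j else a + n - j)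
    (eb : b' = if j < b then b - j else b + n - j)
    (ec : c' = if j < c then c - j else c + n - j)
    (ed : d' = if j < d then d - j else d + n - j)
    (hnc : ¬ ArcsCross a b c d) : ¬ ArcsCross a' b' c' d' := by
  unfold ArcsCross StrictlyBetween Xor' Xor at *
  split_ifs at ea eb ec ed <;> omega

lemma between_shift {n j a b x a' b' x' : ℕ}
    (han : a ≤ n) (hbn : b ≤ n) (hxn : x ≤ n)
    (ha1 : 1 ≤ a) (hb1 : 1 ≤ b) (hx1 : 1 ≤ x)
    (h2 : a ≠ x) (h3 : b ≠ x)
    (hj : j ≤ n)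
    (hiff : a ≤ j ↔ b ≤ j)
    (ea : a' = if j < a then a - j else a + n - j)
    (eb : b' = if j < b then b - j else b + n - j)
    (ex : x' = if j < x then x - j else x + n - j)
    (hnb : ¬ StrictlyBetween a b x) : ¬ StrictlyBetween a' b' x' := by
  unfold StrictlyBetween at *
  split_ifs at ea eb ex <;> omega

lemma length_eq {n : ℕ} {p : List ℕ} (hperm : p.Perm (List.range' 1 n)) :
    p.length = n := by simpa using hperm.length_eq

lemma nodup {n : ℕ} {p : List ℕ} (hperm : p.Perm (List.range' 1 n)) : p.Nodup :=
  hperm.nodup_iff.2 (List.nodup_range')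

lemma mem_iff {n : ℕ} {p : List ℕ} (hperm : p.Perm (List.range' 1 n)) (e : ℕ) :
    e ∈ p ↔ 1 ≤ e ∧ e ≤ n := by rw [hperm.mem_iff, List.mem_range'_1]; omega

lemma pos_le {n : ℕ} {p : List ℕ} (hperm : p.Perm (List.range' 1 n)) {e : ℕ}
    (h1 : 1 ≤ e) (h2 : e ≤ n) : posOf p e ≤ n := by
  have hm : e ∈ p := (mem_iff hperm e).2 ⟨h1, h2⟩
  have := List.idxOf_lt_length_iff.2 hm
  have hl := length_eq hperm
  unfold posOf; omega

lemma pos_pos (p : List ℕ) (e : ℕ) : 1 ≤ posOf p e := Nat.succ_le_succ (Nat.zero_le _)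

lemma pos_inj {n : ℕ} {p : List ℕ} (hperm : p.Perm (List.range' 1 n)) {a b : ℕ}
    (ha1 : 1 ≤ a) (ha2 : a ≤ n) (hb1 : 1 ≤ b) (hb2 : b ≤ n)
    (hab : posOf p a = posOf p b) : a = b := by
  have hma : a ∈ p := (mem_iff hperm a).2 ⟨ha1, ha2⟩
  have hmb : b ∈ p := (mem_iff hperm b).2 ⟨hb1, hb2⟩
  exact (List.idxOf_inj hma).1 (by unfold posOf at hab; omega)

lemma pos_ne {n : ℕ} {p : List ℕ} (hperm : p.Perm (List.range' 1 n)) {a b : ℕ}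
    (ha1 : 1 ≤ a) (ha2 : a ≤ n) (hb1 : 1 ≤ b) (hb2 : b ≤ n)
    (hab : a ≠ b) : posOf p a ≠ posOf p b :=
  fun hc => hab (pos_inj hperm ha1 ha2 hb1 hb2 hc)

lemma posOf_rotate {p : List ℕ} (hp : p.Nodup) {e : ℕ} (he : e ∈ p) {j : ℕ}
    (hj : j ≤ p.length) :
    posOf (p.rotate j) e =
      if j < posOf p e then posOf p e - j else posOf p e + p.length - j := by
  have hlt : p.idxOf e < p.length := List.idxOf_lt_length_iff.2 he
  set i := p.idxOf e with hi
  set k := if j ≤ i then i - j else i + p.length - j with hk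
  have hklt : k < (p.rotate j).length := by
    rw [List.length_rotate]; rw [hk]; split_ifs <;> omega
  have hkj : k + j = i ∨ k + j = i + p.length := by rw [hk]; split_ifs <;> omega
  have hmod : (k + j) % p.length = i := by
    rcases hkj with h' | h' <;> rw [h']
    · exact Nat.mod_eq_of_lt hlt
    · rw [Nat.add_mod_right]; exact Nat.mod_eq_of_lt hlt
  have hgen : ∀ m (hm : m < p.length), m = i → p[m]'hm = e := by
    rintro m hm rfl
    simpa [← hi] using List.idxOf_get (a := e) (l := p) (by simpa using hlt)
  have hget : (p.rotate j)[k] = e := by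
    rw [List.getElem_rotate]; exact hgen _ _ hmod
  have hidx := (List.nodup_rotate.2 hp).idxOf_getElem k hklt
  rw [hget] at hidx
  unfold posOf
  rw [hidx, hk, ← hi]
  split_ifs <;> omega

/-- Position formula in the rotation, stated with `n`. -/
lemma pos_rot {n : ℕ} {p : List ℕ} (hperm : p.Perm (List.range' 1 n)) {e j : ℕ}
    (he1 : 1 ≤ e) (he2 : e ≤ n) (hj : j ≤ n) :
    posOf (p.rotate j) e =
      if j < posOf p e then posOf p e - j else posOf p e + n - j := by
  have hl := length_eq hperm
  rw [posOf_rotate (nodup hperm) ((mem_iff hperm e).2 ⟨he1, he2⟩) (by omega), hl]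

/-- If no visible-side arc of `p` has exactly one endpoint in positions `1..j`,
then the rotation of the semi-meander `p` by `j` is again a semi-meander. -/
lemma rotate_semiMeander {n : ℕ} {p : List ℕ} (h : IsSemiMeander n p) {j : ℕ}
    (hj1 : 1 ≤ j) (hjn : j ≤ n)
    (hcut : ∀ i, 1 ≤ i → i + 1 ≤ n → i % 2 = n % 2 →
      (posOf p i ≤ j ↔ posOf p (i + 1) ≤ j)) :
    IsSemiMeander n (p.rotate j) := by
  obtain ⟨⟨hperm, hcross⟩, hvis⟩ := h
  have hn1 : 1 ≤ n := le_trans hj1 hjn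
  refine ⟨⟨(List.rotate_perm p j).trans hperm, ?_⟩, ?_⟩
  · intro i j' hi hij hj'n hpar
    exact cross_shift (n := n) (j := j)
      (pos_le hperm (by omega) (by omega)) (pos_le hperm (by omega) (by omega))
      (pos_le hperm (by omega) (by omega)) (pos_le hperm (by omega) (by omega))
      (pos_pos p i) (pos_pos p (i+1)) (pos_pos p j') (pos_pos p (j'+1))
      (pos_ne hperm (by omega) (by omega) (by omega) (by omega) (by omega))
      (pos_ne hperm (by omega) (by omega) (by omega) (by omega) (by omega))
      (pos_ne hperm (by omega) (by omega) (by omega) (by omega) (by omega))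
      (pos_ne hperm (by omega) (by omega) (by omega) (by omega) (by omega))
      hjn
      (pos_rot hperm (by omega) (by omega) hjn) (pos_rot hperm (by omega) (by omega) hjn)
      (pos_rot hperm (by omega) (by omega) hjn) (pos_rot hperm (by omega) (by omega) hjn)
      (hcross i j' hi hij hj'n hpar)
  · intro i hi hin hpar
    have hin' : i + 1 ≠ n := by omega
    exact between_shift (n := n) (j := j)
      (pos_le hperm (by omega) (by omega)) (pos_le hperm (by omega) (by omega))
      (pos_le hperm hn1 le_rfl)
      (pos_pos p i) (pos_pos p (i+1)) (pos_pos p n)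
      (pos_ne hperm (by omega) (by omega) hn1 le_rfl (by omega))
      (pos_ne hperm (by omega) (by omega) hn1 le_rfl (by omega))
      hjn (hcut i hi hin hpar)
      (pos_rot hperm (by omega) (by omega) hjn) (pos_rot hperm (by omega) (by omega) hjn)
      (pos_rot hperm hn1 le_rfl hjn)
      (hvis i hi hin hpar)

/-- The master lemma: if the visible-side arc incident to position 1 joins the
stamps `{ic, ic+1} = {h1, s}`, and no other visible-side arc touches stamp `h1`
or `s`, then the least rotation giving a semi-meander is `posOf p s`. -/
lemma master {n : ℕ} {p : List ℕ} (h : IsSemiMeander n p) {h1 : ℕ}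
    (hhead : p.head? = some h1) (hne : h1 ≠ n) {jstar : ℕ}
    (hleast : IsLeast {j : ℕ | 1 ≤ j ∧ IsSemiMeander n (p.rotate j)} jstar)
    {s ic : ℕ} (hic1 : 1 ≤ ic) (hic2 : ic + 1 ≤ n) (hicpar : ic % 2 = n % 2)
    (hs1 : 1 ≤ s) (hsn : s ≤ n) (hsh1 : s ≠ h1) (hsnn : s ≠ n)
    (hpair : (ic = h1 ∧ ic + 1 = s) ∨ (ic = s ∧ ic + 1 = h1))
    (honly : ∀ i, 1 ≤ i → i + 1 ≤ n → i % 2 = n % 2 → i ≠ ic →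
      i ≠ h1 ∧ i ≠ s ∧ i + 1 ≠ h1 ∧ i + 1 ≠ s) :
    jstar = posOf p s := by
  obtain ⟨⟨hperm, hcross⟩, hvis⟩ := h
  have hn1 : 1 ≤ n := by omega
  -- head facts
  have hp1 : posOf p h1 = 1 := by
    cases p with
    | nil => simp at hhead
    | cons a t =>
      obtain rfl : a = h1 := by simpa using hhead
      simp [posOf]
  have hh1mem : 1 ≤ h1 ∧ h1 ≤ n := by
    refine (mem_iff hperm h1).1 ?_
    cases p with
    | nil => simp at hhead
    | cons a t =>
      obtain rfl : a = h1 := by simpa using hhead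
      exact List.mem_cons_self
  set q := posOf p s with hqdef
  have hq2 : 2 ≤ q := by
    have h1q : q ≠ 1 := by
      rw [← hp1]; exact pos_ne hperm hs1 hsn hh1mem.1 hh1mem.2 hsh1
    have := pos_pos p s; omega
  have hqn : q ≤ n := pos_le hperm hs1 hsn
  set x := posOf p n with hxdef
  have hxn : x ≤ n := pos_le hperm hn1 le_rfl
  have hx1 : 1 ≤ x := pos_pos p n
  have hxq : x ≠ q := pos_ne hperm hn1 le_rfl hs1 hsn (fun hc => hsnn hc.symm)
  have hxne1 : x ≠ 1 := by
    rw [← hp1]; exact pos_ne hperm hn1 le_rfl hh1mem.1 hh1mem.2 (fun hc => hne hc.symm)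
  -- the positions of the endpoints of the arc `ic`
  have hpicpair : (posOf p ic = 1 ∧ posOf p (ic + 1) = q) ∨
      (posOf p ic = q ∧ posOf p (ic + 1) = 1) := by
    rcases hpair with ⟨e1, e2⟩ | ⟨e1, e2⟩
    · left
      rw [e1] at e2 ⊢
      rw [hp1, e2]
      exact ⟨rfl, hqdef.symm⟩
    · right
      rw [e1] at e2 ⊢
      rw [e2, hp1]
      exact ⟨hqdef.symm, rfl⟩
  -- x is not under the arc `ic`, hence x > q
  have hxgt : q < x := by
    have hnb := hvis ic hic1 hic2 hicpar
    unfold StrictlyBetween at hnb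
    rcases hpicpair with ⟨e1, e2⟩ | ⟨e1, e2⟩ <;> rw [e1, e2] at hnb <;> omega
  -- rotation by q is a semi-meander
  have hmem : q ∈ {j : ℕ | 1 ≤ j ∧ IsSemiMeander n (p.rotate j)} := by
    refine ⟨by omega, rotate_semiMeander ⟨⟨hperm, hcross⟩, hvis⟩ (by omega) hqn ?_⟩
    intro i hi hin hpar
    by_cases hiic : i = ic
    · subst hiic
      rcases hpicpair with ⟨e1, e2⟩ | ⟨e1, e2⟩ <;> rw [e1, e2] <;> omega
    · obtain ⟨n1, n2, n3, n4⟩ := honly i hi hin hpar hiic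
      set a := posOf p i with hadef
      set b := posOf p (i + 1) with hbdef
      have ha1 : a ≠ 1 := by
        rw [← hp1]; exact pos_ne hperm (by omega) (by omega) hh1mem.1 hh1mem.2 n1
      have hb1 : b ≠ 1 := by
        rw [← hp1]; exact pos_ne hperm (by omega) (by omega) hh1mem.1 hh1mem.2 n3
      have haq : a ≠ q := pos_ne hperm (by omega) (by omega) hs1 hsn n2
      have hbq : b ≠ q := pos_ne hperm (by omega) (by omega) hs1 hsn n4
      have hap : 1 ≤ a := pos_pos p i
      have hbp : 1 ≤ b := pos_pos p (i + 1)
      -- non-crossing with the arc `ic`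
      have hnc : ¬ ArcsCross (posOf p ic) (posOf p (ic + 1)) a b := by
        rcases lt_trichotomy i ic with hlt | heq | hgt
        · have := hcross i ic hi hlt hic2 (by omega)
          rw [arcsCross_comm] at this
          · exact this
          · exact pos_ne hperm (by omega) (by omega) (by omega) (by omega) (by omega)
          · exact pos_ne hperm (by omega) (by omega) (by omega) (by omega) (by omega)
          · exact pos_ne hperm (by omega) (by omega) (by omega) (by omega) (by omega)
          · exact pos_ne hperm (by omega) (by omega) (by omega) (by omega) (by omega)
        · exact absurd heq hiic
        · exact hcross ic i hic1 hgt hin (by omega)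
      unfold ArcsCross StrictlyBetween Xor' Xor at hnc
      rcases hpicpair with ⟨e1, e2⟩ | ⟨e1, e2⟩ <;> rw [e1, e2] at hnc <;> omega
  have hub : jstar ≤ q := hleast.2 hmem
  have hlb : q ≤ jstar := by
    by_contra hcon
    push_neg at hcon
    obtain ⟨hj1, ⟨⟨hperm', hcross'⟩, hvis'⟩⟩ := hleast.1
    have hjn : jstar ≤ n := by omega
    have hv := hvis' ic hic1 hic2 hicpar
    rw [pos_rot hperm (by omega) (by omega) hjn, pos_rot hperm (by omega) (by omega) hjn,
      pos_rot hperm hn1 le_rfl hjn] at hv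
    apply hv
    unfold StrictlyBetween
    rcases hpicpair with ⟨e1, e2⟩ | ⟨e1, e2⟩ <;> rw [e1, e2] <;>
      rw [← hxdef] <;> split_ifs <;> omega
  omega

end SMaux

/-- Lemma on right rotations: let `α = p₁⋯pₙ` be a semi-meander with `p₁ ≠ n` and let
`j*` be the least `j ≥ 1` such that the right rotation by `j` (moving the prefix
`p₁⋯pⱼ` to the end) is a semi-meander. Then `j* = 1` if `p₁ = 1` and `n` is even;
otherwise `j* = I(p₁+1, α)` if `p₁` and `n` have the same parity, and
`j* = I(p₁-1, α)` if they have different parities. -/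
theorem semi_meander_next_right_rotation (n : ℕ) (p : List ℕ) (h : IsSemiMeander n p)
    (h1 : ℕ) (hhead : p.head? = some h1) (hne : h1 ≠ n) (jstar : ℕ)
    (hleast : IsLeast {j : ℕ | 1 ≤ j ∧ IsSemiMeander n (p.rotate j)} jstar) :
    (h1 = 1 ∧ Even n → jstar = 1) ∧
    (¬ (h1 = 1 ∧ Even n) →
      (h1 % 2 = n % 2 → jstar = posOf p (h1 + 1)) ∧
      (h1 % 2 ≠ n % 2 → jstar = posOf p (h1 - 1))) := by
  have hperm := h.1.1
  have hh1mem : 1 ≤ h1 ∧ h1 ≤ n := by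
    refine (SMaux.mem_iff hperm h1).1 ?_
    cases p with
    | nil => simp at hhead
    | cons a t =>
      obtain rfl : a = h1 := by simpa using hhead
      exact List.mem_cons_self
  have hp1 : posOf p h1 = 1 := by
    cases p with
    | nil => simp at hhead
    | cons a t =>
      obtain rfl : a = h1 := by simpa using hhead
      simp [posOf]
  have hn1 : 1 ≤ n := by omega
  constructor
  · rintro ⟨rfl, hev⟩
    have hnmod : n % 2 = 0 := Nat.even_iff.1 hev
    have hmem1 : 1 ∈ {j : ℕ | 1 ≤ j ∧ IsSemiMeander n (p.rotate j)} := by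
      refine ⟨le_rfl, SMaux.rotate_semiMeander h le_rfl hn1 ?_⟩
      intro i hi hin hpar
      have hA : posOf p i ≠ 1 := by
        intro hc
        have : i = 1 := SMaux.pos_inj hperm (by omega) (by omega) hh1mem.1 hh1mem.2
          (by rw [hc, hp1])
        omega
      have hB : posOf p (i + 1) ≠ 1 := by
        intro hc
        have : i + 1 = 1 := SMaux.pos_inj hperm (by omega) (by omega) hh1mem.1 hh1mem.2
          (by rw [hc, hp1])
        omega
      have := SMaux.pos_pos p i
      have := SMaux.pos_pos p (i + 1)
      omega
    have := hleast.2 hmem1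
    have := hleast.1.1
    omega
  · intro hnot
    by_cases hpar : h1 % 2 = n % 2
    · have hkey : jstar = posOf p (h1 + 1) := by
        refine SMaux.master h hhead hne hleast (ic := h1) (s := h1 + 1)
          hh1mem.1 (by omega) hpar (by omega) (by omega) (by omega) (by omega)
          (Or.inl ⟨rfl, rfl⟩) ?_
        intro i hi hin hipar hiic
        refine ⟨hiic, by omega, by omega, fun hc => hiic (by omega)⟩
      exact ⟨fun _ => hkey, fun hc => absurd hpar hc⟩
    · have hh1ge2 : 2 ≤ h1 := by
        rcases Nat.eq_or_lt_of_le hh1mem.1 with heq | hlt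
        · exfalso; apply hnot
          refine ⟨heq.symm, ?_⟩
          rw [Nat.even_iff]
          omega
        · omega
      have hkey : jstar = posOf p (h1 - 1) := by
        refine SMaux.master h hhead hne hleast (ic := h1 - 1) (s := h1 - 1)
          (by omega) (by omega) (by omega) (by omega) (by omega) (by omega) (by omega)
          (Or.inr ⟨rfl, by omega⟩) ?_
        intro i hi hin hipar hiic
        refine ⟨by omega, by omega, by omega, by omega⟩
      exact ⟨fun hc => absurd hc hpar, fun _ => hkey⟩
end

section
/- Let α = p₁p₂⋯pₙ be a semi-meander with pₙ ≠ n. Let j* be the least j ≥ 1 such that the left rotation moving the suffix of length j to the front, i.e., pₙ₋ⱼ₊₁⋯pₙp₁⋯pₙ₋ⱼ, is a semi-meander. Then: j* = 1 if pₙ = 1 and n is even; j* = n − I(pₙ+1, α) + 1 if pₙ and n have the same parity; and j* = n − I(pₙ−1, α) + 1 if pₙ and n have different parities, where I(e, α) is the position of symbol e in α. -/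
set_option maxHeartbeats 1000000

namespace SMAux

/-- The position shift induced by `List.rotate m` on 1-based positions. -/
def shf (n m q : ℕ) : ℕ := if m < q then q - m else q + (n - m)

theorem keyA {n m a b x : ℕ} (ha1 : 1 ≤ a) (han : a ≤ n) (hb1 : 1 ≤ b) (hbn : b ≤ n)
    (hx1 : 1 ≤ x) (hxn : x ≤ n) (hm : m < n) (hab : a ≠ b) (hax : a ≠ x) (hbx : b ≠ x) :
    StrictlyBetween (shf n m a) (shf n m b) (shf n m x) ↔
      Xor' (StrictlyBetween a b x) ((a ≤ m ∧ m < b) ∨ (b ≤ m ∧ m < a)) := by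
  unfold StrictlyBetween Xor' Xor shf
  split_ifs <;> omega

theorem keyCross {n m a b c d : ℕ} (ha1 : 1 ≤ a) (han : a ≤ n) (hb1 : 1 ≤ b) (hbn : b ≤ n)
    (hc1 : 1 ≤ c) (hcn : c ≤ n) (hd1 : 1 ≤ d) (hdn : d ≤ n) (hm : m < n)
    (hab : a ≠ b) (hac : a ≠ c) (hbc : b ≠ c) (had : a ≠ d) (hbd : b ≠ d) :
    ArcsCross (shf n m a) (shf n m b) (shf n m c) (shf n m d) ↔ ArcsCross a b c d := by
  unfold ArcsCross
  rw [keyA ha1 han hb1 hbn hc1 hcn hm hab hac hbc,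
      keyA ha1 han hb1 hbn hd1 hdn hm hab had hbd]
  unfold Xor' Xor
  tauto

theorem posOf_rotate {n m : ℕ} {p : List ℕ} (hlen : p.length = n) (hnd : p.Nodup)
    {e : ℕ} (he : e ∈ p) (hm : m < n) :
    posOf (p.rotate m) e = shf n m (posOf p e) := by
  have hi : p.idxOf e < n := hlen ▸ List.idxOf_lt_length_iff.2 he
  have hnd' : (p.rotate m).Nodup := List.nodup_rotate.2 hnd
  have hlen' : (p.rotate m).length = n := by rw [List.length_rotate, hlen]
  have hjlt : shf n m (posOf p e) - 1 < n := by
    unfold shf posOf; split_ifs <;> omega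
  have hgem : (p.rotate m)[shf n m (posOf p e) - 1]'(by omega) = e := by
    rw [List.getElem_rotate]
    have h2 : (shf n m (posOf p e) - 1 + m) % p.length = p.idxOf e := by
      rw [hlen]; unfold shf posOf
      split_ifs with hc
      · rw [Nat.mod_eq_of_lt (by omega)]; omega
      · have h3 : p.idxOf e + 1 + (n - m) - 1 + m = p.idxOf e + n := by omega
        rw [h3, Nat.add_mod_right, Nat.mod_eq_of_lt hi]
    simp only [h2]
    exact List.getElem_idxOf (by omega)
  have h4 := List.Nodup.idxOf_getElem hnd' (shf n m (posOf p e) - 1) (by omega)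
  rw [hgem] at h4
  have hp1 : 1 ≤ posOf p e := by unfold posOf; omega
  have h5 : 1 ≤ shf n m (posOf p e) := by unfold shf; split_ifs <;> omega
  have hfin : posOf (p.rotate m) e = List.idxOf e (p.rotate m) + 1 := rfl
  omega

theorem posOf_ne {p : List ℕ} {e f : ℕ} (hnd : p.Nodup) (he : e ∈ p) (hf : f ∈ p)
    (hne : e ≠ f) : posOf p e ≠ posOf p f := by
  unfold posOf
  intro hc
  have he' := List.getElem_idxOf (List.idxOf_lt_length_iff.2 he)
  have hf' := List.getElem_idxOf (List.idxOf_lt_length_iff.2 hf)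
  have hix : p.idxOf e = p.idxOf f := by omega
  simp only [hix] at he'
  exact hne (he'.symm.trans hf')

theorem mem_iff {n : ℕ} {p : List ℕ} (hperm : p.Perm (List.range' 1 n)) {e : ℕ} :
    e ∈ p ↔ 1 ≤ e ∧ e ≤ n := by
  rw [hperm.mem_iff, List.mem_range'_1]; omega

theorem length_eq {n : ℕ} {p : List ℕ} (hperm : p.Perm (List.range' 1 n)) :
    p.length = n := by
  rw [hperm.length_eq, List.length_range']

theorem nodup_of_perm {n : ℕ} {p : List ℕ} (hperm : p.Perm (List.range' 1 n)) :
    p.Nodup := hperm.nodup_iff.2 (List.nodup_range')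

theorem posOf_le {n : ℕ} {p : List ℕ} (hlen : p.length = n) {e : ℕ} (he : e ∈ p) :
    posOf p e ≤ n := by
  have := List.idxOf_lt_length_iff.2 he
  unfold posOf; omega

/-- Rotating by `m` preserves being a semi-meander, provided no relevant arc
separates the position of `n` from the cut gap `m`. -/
theorem rot_semimeander {n : ℕ} {p : List ℕ} (h : IsSemiMeander n p) {m : ℕ} (hm : m < n)
    (hsep : ∀ i, 1 ≤ i → i + 1 ≤ n → i % 2 = n % 2 →
      ¬ ((posOf p i ≤ m ∧ m < posOf p (i + 1)) ∨ (posOf p (i + 1) ≤ m ∧ m < posOf p i))) :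
    IsSemiMeander n (p.rotate m) := by
  obtain ⟨⟨hperm, hcross⟩, hvis⟩ := h
  have hlen := length_eq hperm
  have hnd := nodup_of_perm hperm
  have hmem : ∀ e : ℕ, 1 ≤ e → e ≤ n → e ∈ p := fun e h1 h2 => (mem_iff hperm).2 ⟨h1, h2⟩
  have hple : ∀ e : ℕ, posOf p e ≤ n → True := fun _ _ => trivial
  refine ⟨⟨(p.rotate_perm m).trans hperm, ?_⟩, ?_⟩
  · intro i j hi hij hjn hpar
    have hj2 : i + 2 ≤ j := by omega
    have m1 : i ∈ p := hmem i hi (by omega)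
    have m2 : i + 1 ∈ p := hmem (i+1) (by omega) (by omega)
    have m3 : j ∈ p := hmem j (by omega) (by omega)
    have m4 : j + 1 ∈ p := hmem (j+1) (by omega) (by omega)
    rw [posOf_rotate hlen hnd m1 hm, posOf_rotate hlen hnd m2 hm,
        posOf_rotate hlen hnd m3 hm, posOf_rotate hlen hnd m4 hm]
    rw [keyCross (by unfold posOf; omega) (posOf_le hlen m1) (by unfold posOf; omega)
        (posOf_le hlen m2) (by unfold posOf; omega) (posOf_le hlen m3)
        (by unfold posOf; omega) (posOf_le hlen m4) hm
        (posOf_ne hnd m1 m2 (by omega)) (posOf_ne hnd m1 m3 (by omega))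
        (posOf_ne hnd m2 m3 (by omega)) (posOf_ne hnd m1 m4 (by omega))
        (posOf_ne hnd m2 m4 (by omega))]
    exact hcross i j hi hij hjn hpar
  · intro i hi hin hpar
    have m1 : i ∈ p := hmem i hi (by omega)
    have m2 : i + 1 ∈ p := hmem (i+1) (by omega) (by omega)
    have hn1 : 1 ≤ n := by omega
    have m3 : n ∈ p := hmem n hn1 le_rfl
    have hineq : i ≠ n := by omega
    have hineq2 : i + 1 ≠ n := by omega
    rw [posOf_rotate hlen hnd m1 hm, posOf_rotate hlen hnd m2 hm,
        posOf_rotate hlen hnd m3 hm]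
    rw [keyA (by unfold posOf; omega) (posOf_le hlen m1) (by unfold posOf; omega)
        (posOf_le hlen m2) (by unfold posOf; omega) (posOf_le hlen m3) hm
        (posOf_ne hnd m1 m2 (by omega)) (posOf_ne hnd m1 m3 hineq)
        (posOf_ne hnd m2 m3 hineq2)]
    have h1 := hvis i hi hin hpar
    have h2 := hsep i hi hin hpar
    unfold Xor' Xor
    tauto

/-- If a relevant arc does separate the position of `n` from the cut gap `m`,
the rotation by `m` is not a semi-meander. -/
theorem rot_fail {n : ℕ} {p : List ℕ} (h : IsSemiMeander n p) {m y : ℕ} (hm : m < n)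
    (hy1 : 1 ≤ y) (hyn : y + 1 ≤ n) (hpar : y % 2 = n % 2)
    (hsep : (posOf p y ≤ m ∧ m < posOf p (y + 1)) ∨
            (posOf p (y + 1) ≤ m ∧ m < posOf p y)) :
    ¬ IsSemiMeander n (p.rotate m) := by
  intro hsm
  obtain ⟨⟨hperm, hcross⟩, hvis⟩ := h
  have hlen := length_eq hperm
  have hnd := nodup_of_perm hperm
  have hmem : ∀ e : ℕ, 1 ≤ e → e ≤ n → e ∈ p := fun e h1 h2 => (mem_iff hperm).2 ⟨h1, h2⟩
  have m1 : y ∈ p := hmem y hy1 (by omega)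
  have m2 : y + 1 ∈ p := hmem (y+1) (by omega) (by omega)
  have m3 : n ∈ p := hmem n (by omega) le_rfl
  have hyne : y ≠ n := by omega
  have hyne2 : y + 1 ≠ n := by omega
  have hv := hsm.2 y hy1 hyn hpar
  rw [posOf_rotate hlen hnd m1 hm, posOf_rotate hlen hnd m2 hm,
      posOf_rotate hlen hnd m3 hm] at hv
  rw [keyA (by unfold posOf; omega) (posOf_le hlen m1) (by unfold posOf; omega)
      (posOf_le hlen m2) (by unfold posOf; omega) (posOf_le hlen m3) hm
      (posOf_ne hnd m1 m2 (by omega)) (posOf_ne hnd m1 m3 hyne)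
      (posOf_ne hnd m2 m3 hyne2)] at hv
  have h1 := hvis y hy1 hyn hpar
  unfold Xor' Xor at hv
  tauto

theorem main_core {n : ℕ} {p : List ℕ} (h : IsSemiMeander n p) {y q : ℕ}
    (hy1 : 1 ≤ y) (hyn : y + 1 ≤ n) (hpar : y % 2 = n % 2)
    (hq : posOf p y = n ∧ posOf p (y + 1) = q ∨ posOf p y = q ∧ posOf p (y + 1) = n) :
    IsLeast {j : ℕ | 1 ≤ j ∧ IsSemiMeander n (p.rotate (n - j))} (n - q + 1) := by
  have hperm := h.1.1
  have hlen := length_eq hperm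
  have hnd := nodup_of_perm hperm
  have hmem : ∀ e : ℕ, 1 ≤ e → e ≤ n → e ∈ p := fun e h1 h2 => (mem_iff hperm).2 ⟨h1, h2⟩
  have m1 : y ∈ p := hmem y hy1 (by omega)
  have m2 : y + 1 ∈ p := hmem (y+1) (by omega) (by omega)
  have hq1 : 1 ≤ q := by rcases hq with ⟨_, h2⟩ | ⟨h2, _⟩ <;> unfold posOf at h2 <;> omega
  have hqn : q ≤ n := by
    rcases hq with ⟨_, h2⟩ | ⟨h2, _⟩
    · exact h2 ▸ posOf_le hlen m2
    · exact h2 ▸ posOf_le hlen m1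
  have hqnn : q ≠ n := by
    have := posOf_ne hnd m1 m2 (by omega)
    rcases hq with ⟨h1', h2⟩ | ⟨h2, h1'⟩ <;> omega
  constructor
  · refine ⟨by omega, ?_⟩
    have hm0 : n - (n - q + 1) = q - 1 := by omega
    rw [hm0]
    refine rot_semimeander h (by omega) ?_
    intro i hi hin hipar hsep
    by_cases hiy : i = y
    · subst hiy
      rcases hq with ⟨h1', h2⟩ | ⟨h2, h1'⟩ <;> rw [h1', h2] at hsep <;> omega
    · -- the arc (i, i+1) would cross the arc (y, y+1)
      have hi1y : i ≠ y + 1 := by omega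
      have hi2y : i + 1 ≠ y := by omega
      have hi2y2 : i + 1 ≠ y + 1 := by omega
      have m3 : i ∈ p := hmem i hi (by omega)
      have m4 : i + 1 ∈ p := hmem (i+1) (by omega) (by omega)
      have hne1 := posOf_ne hnd m3 m1 hiy
      have hne2 := posOf_ne hnd m3 m2 hi1y
      have hne3 := posOf_ne hnd m4 m1 hi2y
      have hne4 := posOf_ne hnd m4 m2 hi2y2
      have hb1 := posOf_le hlen m3
      have hb2 := posOf_le hlen m4
      have hb3 := posOf_le hlen m1
      have hb4 := posOf_le hlen m2
      rcases lt_or_gt_of_ne hiy with hlt | hgt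
      · have hc := h.1.2 i y hi hlt hyn (by omega)
        unfold ArcsCross Xor' Xor StrictlyBetween at hc
        rcases hq with ⟨h1', h2⟩ | ⟨h2, h1'⟩ <;> rw [h1', h2] at hc <;> omega
      · have hc := h.1.2 y i hy1 hgt (by omega) (by omega)
        unfold ArcsCross Xor' Xor StrictlyBetween at hc
        rcases hq with ⟨h1', h2⟩ | ⟨h2, h1'⟩ <;> rw [h1', h2] at hc <;> omega
  · rintro j ⟨hj1, hjsm⟩
    by_contra hcon
    have hjlt : j ≤ n - q := by omega
    have hmlt : n - j < n := by omega
    have hqm : q ≤ n - j := by omega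
    refine rot_fail h hmlt hy1 hyn hpar ?_ hjsm
    rcases hq with ⟨h1', h2⟩ | ⟨h2, h1'⟩ <;> rw [h1', h2] <;> omega

theorem special_core {n : ℕ} {p : List ℕ} (h : IsSemiMeander n p)
    (hpos : posOf p 1 = n) (hn2 : 2 ≤ n) (heven : n % 2 = 0) :
    IsLeast {j : ℕ | 1 ≤ j ∧ IsSemiMeander n (p.rotate (n - j))} 1 := by
  have hperm := h.1.1
  have hlen := length_eq hperm
  have hnd := nodup_of_perm hperm
  have hmem : ∀ e : ℕ, 1 ≤ e → e ≤ n → e ∈ p := fun e h1 h2 => (mem_iff hperm).2 ⟨h1, h2⟩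
  have m1 : (1 : ℕ) ∈ p := hmem 1 le_rfl (by omega)
  constructor
  · refine ⟨le_rfl, ?_⟩
    refine rot_semimeander h (by omega) ?_
    intro i hi hin hipar hsep
    have hi2 : 2 ≤ i := by omega
    have m3 : i ∈ p := hmem i hi (by omega)
    have m4 : i + 1 ∈ p := hmem (i+1) (by omega) (by omega)
    have hne1 := posOf_ne hnd m3 m1 (by omega)
    have hne2 := posOf_ne hnd m4 m1 (by omega)
    have hb1 := posOf_le hlen m3
    have hb2 := posOf_le hlen m4
    omega
  · rintro j ⟨hj1, _⟩
    exact hj1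

end SMAux

/-- Lemma on left rotations: let `α = p₁⋯pₙ` be a semi-meander with `pₙ ≠ n` and let
`j*` be the least `j ≥ 1` such that the left rotation moving the suffix of length `j`
to the front, i.e. `pₙ₋ⱼ₊₁⋯pₙp₁⋯pₙ₋ⱼ`, is a semi-meander. Then `j* = 1` if `pₙ = 1`
and `n` is even; otherwise `j* = n - I(pₙ+1, α) + 1` if `pₙ` and `n` have the same
parity, and `j* = n - I(pₙ-1, α) + 1` if they have different parities. -/
theorem semi_meander_next_left_rotation (n : ℕ) (p : List ℕ) (h : IsSemiMeander n p)
    (pn : ℕ) (hlast : p.getLast? = some pn) (hne : pn ≠ n) (jstar : ℕ)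
    (hleast : IsLeast {j : ℕ | 1 ≤ j ∧ IsSemiMeander n (p.rotate (n - j))} jstar) :
    (pn = 1 ∧ Even n → jstar = 1) ∧
    (¬ (pn = 1 ∧ Even n) →
      (pn % 2 = n % 2 → jstar = n - posOf p (pn + 1) + 1) ∧
      (pn % 2 ≠ n % 2 → jstar = n - posOf p (pn - 1) + 1)) := by
  have hperm := h.1.1
  have hlen := SMAux.length_eq hperm
  have hnd := SMAux.nodup_of_perm hperm
  have hnil : p ≠ [] := by
    intro h0; rw [h0] at hlast; simp at hlast
  have hn1 : 1 ≤ n := by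
    have := List.length_pos_iff.2 hnil
    omega
  have hgl : p.getLast hnil = pn := by
    have := List.getLast?_eq_getLast hnil
    rw [hlast] at this
    exact (Option.some_inj.1 this).symm
  have hget : p[n - 1]'(by omega) = pn := by
    rw [← hgl, List.getLast_eq_getElem]
    simp [hlen]
  have hpn_mem : pn ∈ p := by
    rw [← hget]; exact List.getElem_mem _
  have hpn_range : 1 ≤ pn ∧ pn ≤ n := (SMAux.mem_iff hperm).1 hpn_mem
  have hn2 : 2 ≤ n := by omega
  have hposn : posOf p pn = n := by
    unfold posOf
    have := List.Nodup.idxOf_getElem hnd (n - 1) (by omega)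
    rw [hget] at this
    omega
  constructor
  · rintro ⟨hpn1, hev⟩
    have heven : n % 2 = 0 := Nat.even_iff.1 hev
    exact hleast.unique (SMAux.special_core h (hpn1 ▸ hposn) hn2 heven)
  · intro hnspec
    constructor
    · intro hsame
      refine hleast.unique (SMAux.main_core (y := pn) (q := posOf p (pn + 1)) h (by omega) (by omega) hsame ?_)
      exact Or.inl ⟨hposn, rfl⟩
    · intro hdiff
      have hpn2 : 2 ≤ pn := by
        rcases Nat.lt_or_ge pn 2 with h2 | h2
        · exfalso
          have hpn1 : pn = 1 := by omega
          have : n % 2 = 0 := by omega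
          exact hnspec ⟨hpn1, Nat.even_iff.2 this⟩
        · exact h2
      have hsub : pn - 1 + 1 = pn := by omega
      refine hleast.unique (SMAux.main_core (y := pn - 1) (q := posOf p (pn - 1)) h (by omega) (by omega) (by omega) ?_)
      exact Or.inr ⟨rfl, by rw [hsub]; exact hposn⟩
end

section
/- Let α = p₁p₂⋯pₙ be a semi-meander of order n (n ≥ 2) with p₁ and n of the same parity and p₁ ≠ n, p₁ ≠ 1 or n odd. Then for every j with 1 ≤ j < I(p₁+1, α), the rotation pⱼ₊₁⋯pₙp₁⋯pⱼ is not a semi-meander. -/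
/-- Minimality half of the rotation-step lemma: let `α = p₁⋯pₙ` be a semi-meander of
order `n ≥ 2` with `p₁` and `n` of the same parity, `p₁ ≠ n`, and not (`p₁ = 1` and
`n` even). Then for every `j` with `1 ≤ j < I(p₁ + 1, α)`, the rotation
`pⱼ₊₁⋯pₙp₁⋯pⱼ` is not a semi-meander. -/
theorem semi_meander_rotation_minimality (n : ℕ) (hn : 2 ≤ n) (p : List ℕ)
    (h : IsSemiMeander n p) (h1 : ℕ) (hhead : p.head? = some h1)
    (hpar : h1 % 2 = n % 2) (hne : h1 ≠ n) (hnot : h1 ≠ 1 ∨ Odd n)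
    (j : ℕ) (hj1 : 1 ≤ j) (hj2 : j < posOf p (h1 + 1)) :
    ¬ IsSemiMeander n (p.rotate j) := by
  intro h'
  have hlen : p.length = n := by
    have := h.1.1.length_eq
    simpa using this
  have hnd : p.Nodup := h.1.1.nodup_iff.mpr (List.nodup_range' (s := 1) (n := n))
  have hmem : ∀ e, e ∈ p ↔ 1 ≤ e ∧ e ≤ n := by
    intro e
    rw [h.1.1.mem_iff, List.mem_range'_1]
    omega
  have hpne : p ≠ [] := by intro hh; simp [hh] at hhead
  have h0 : ∀ hh : 0 < p.length, p[0] = h1 := by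
    intro hh
    have := List.head?_eq_getElem? (l := p)
    rw [hhead] at this
    have := this.symm
    rw [List.getElem?_eq_some_iff] at this
    obtain ⟨_, e⟩ := this
    exact e
  have hmem1 : h1 ∈ p := by
    have hh : 0 < p.length := by omega
    have := h0 hh
    exact this ▸ List.getElem_mem hh
  have hb1 : 1 ≤ h1 ∧ h1 ≤ n := (hmem h1).mp hmem1
  have hmem2 : h1 + 1 ∈ p := (hmem _).mpr ⟨by omega, by omega⟩
  have hmemn : n ∈ p := (hmem n).mpr ⟨by omega, le_refl n⟩
  set i1 := p.idxOf (h1 + 1) with hi1def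
  set kn := p.idxOf n with hkndef
  have hi1lt : i1 < n := hlen ▸ List.idxOf_lt_length_iff.mpr hmem2
  have hknlt : kn < n := hlen ▸ List.idxOf_lt_length_iff.mpr hmemn
  have hidx0 : p.idxOf h1 = 0 := by
    have hh : 0 < p.length := by omega
    have := List.Nodup.idxOf_getElem hnd 0 hh
    rw [h0 hh] at this
    exact this
  have hgi1 : p[i1]'(by omega) = h1 + 1 := List.getElem_idxOf (by omega)
  have hgkn : p[kn]'(by omega) = n := List.getElem_idxOf (by omega)
  have hkn0 : kn ≠ 0 := by
    intro hh
    have h0' := h0 (by omega)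
    simp only [hh] at hgkn
    rw [h0'] at hgkn
    omega
  have hkni1 : kn ≠ i1 := by
    intro hh
    simp only [hh] at hgkn
    have := hgi1.symm.trans hgkn
    omega
  have hvis := h.2 h1 hb1.1 (by omega) hpar
  rw [show posOf p h1 = 1 by simp [posOf, hidx0]] at hvis
  have hI : posOf p (h1 + 1) = i1 + 1 := rfl
  have hK : posOf p n = kn + 1 := rfl
  rw [hI, hK] at hvis
  simp only [StrictlyBetween, not_and_or, not_lt] at hvis
  have hknbig : i1 < kn := by
    rcases hvis with hv | hv <;> omega
  have hjle : j ≤ i1 := by rw [hI] at hj2; omega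
  have hqlen : (p.rotate j).length = n := by simp [hlen]
  have hqnd : (p.rotate j).Nodup := ((List.rotate_perm p j).symm.nodup hnd)
  have hjn : j < n := by omega
  have hqget : ∀ k (hk : k < n), (p.rotate j)[k]'(by omega) =
      p[(k + j) % n]'(by rw [hlen]; exact Nat.mod_lt _ (by omega)) := by
    intro k hk
    have := List.getElem_rotate p j k (by omega)
    simpa [hlen] using this
  have hq1 : (p.rotate j).idxOf h1 = n - j := by
    have hg : (p.rotate j)[n - j]'(by omega) = h1 := by
      rw [hqget (n - j) (by omega)]
      have he : (n - j + j) % n = 0 := by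
        rw [Nat.sub_add_cancel (by omega)]
        simp
      simp only [he]
      exact h0 (by omega)
    have := List.Nodup.idxOf_getElem hqnd (n - j) (by omega)
    rw [hg] at this
    exact this
  have hq2 : (p.rotate j).idxOf (h1 + 1) = i1 - j := by
    have hg : (p.rotate j)[i1 - j]'(by omega) = h1 + 1 := by
      rw [hqget (i1 - j) (by omega)]
      have he : (i1 - j + j) % n = i1 := by
        rw [Nat.sub_add_cancel (by omega)]
        exact Nat.mod_eq_of_lt hi1lt
      simp only [he]
      exact hgi1
    have := List.Nodup.idxOf_getElem hqnd (i1 - j) (by omega)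
    rw [hg] at this
    exact this
  have hq3 : (p.rotate j).idxOf n = kn - j := by
    have hg : (p.rotate j)[kn - j]'(by omega) = n := by
      rw [hqget (kn - j) (by omega)]
      have he : (kn - j + j) % n = kn := by
        rw [Nat.sub_add_cancel (by omega)]
        exact Nat.mod_eq_of_lt hknlt
      simp only [he]
      exact hgkn
    have := List.Nodup.idxOf_getElem hqnd (kn - j) (by omega)
    rw [hg] at this
    exact this
  have hvis' := h'.2 h1 hb1.1 (by omega) hpar
  apply hvis'
  show StrictlyBetween (posOf (p.rotate j) h1) (posOf (p.rotate j) (h1 + 1))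
    (posOf (p.rotate j) n)
  simp only [posOf, hq1, hq2, hq3, StrictlyBetween]
  omega
end
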